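/- arXiv:2204.13208 — 2 statements merged into one kernel-verified Lean document; each statement's English description precedes it below -/
import Mathlib

section
/- Define Ω_pull(x,y) = log[1 + ∑_{x⁺ ∈ S_y \ {x}} exp(‖Φ(x) − Φ(x⁺)‖² − α_y)] and its class average Ω̄_pull(y) = (1/|S_y|)∑_{x ∈ S_y} Ω_pull(x,y). Then Ω̄_pull(y) ≥ (2|S_y|/(|S_y|−1)) ∑_{j=1}^K V̂[Φ_j | y] − α_y + log(|S_y|−1), where V̂[Φ_j | y] is the empirical variance of the j-th coordinate of Φ over S_y. -/
open Finset

/-- The average pull regulariser over class `y` is lower bounded by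
`(2|S_y|/(|S_y|−1)) ∑ⱼ V̂[Φⱼ|y] − α_y + log(|S_y|−1)`. -/
theorem avg_pull_ge_variance {ι : Type*} [DecidableEq ι] (K : ℕ)
    (S : Finset ι) (hS : 2 ≤ S.card)
    (Φ : ι → EuclideanSpace ℝ (Fin K)) (α : ℝ)
    (μ : EuclideanSpace ℝ (Fin K)) (hμ : μ = (S.card : ℝ)⁻¹ • ∑ x ∈ S, Φ x)
    (V : Fin K → ℝ)
    (hV : ∀ j, V j = (S.card : ℝ)⁻¹ * ∑ x ∈ S, (Φ x j - μ j) ^ 2)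
    (Ωpull : ι → ℝ)
    (hΩ : ∀ x, Ωpull x =
      Real.log (1 + ∑ xp ∈ S.erase x, Real.exp (‖Φ x - Φ xp‖ ^ 2 - α))) :
    (S.card : ℝ)⁻¹ * ∑ x ∈ S, Ωpull x ≥
      (2 * (S.card : ℝ) / ((S.card : ℝ) - 1)) * (∑ j, V j)
        - α + Real.log ((S.card : ℝ) - 1) := by
  set n : ℝ := (S.card : ℝ) with hn
  have hn2 : (2:ℝ) ≤ n := by rw [hn]; exact_mod_cast hS
  have hn0 : (0:ℝ) < n := by linarith
  have hm0 : (0:ℝ) < n - 1 := by linarith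
  have hcardE : ∀ x ∈ S, ((S.erase x).card : ℝ) = n - 1 := by
    intro x hx
    rw [Finset.card_erase_of_mem hx, Nat.cast_sub (by omega)]
    simp [hn]
  have hnorm : ∀ v : EuclideanSpace ℝ (Fin K), ‖v‖^2 = ∑ j, v j ^ 2 := by
    intro v
    rw [EuclideanSpace.norm_eq, Real.sq_sqrt (by positivity)]
    simp [sq_abs]
  -- per-point lower bound via Jensen
  have hpt : ∀ x ∈ S, Real.log (n-1) + (n-1)⁻¹ * ∑ xp ∈ S.erase x, (‖Φ x - Φ xp‖^2 - α)
      ≤ Ωpull x := by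
    intro x hx
    have hcard := hcardE x hx
    set A := (n-1)⁻¹ * ∑ xp ∈ S.erase x, (‖Φ x - Φ xp‖^2 - α) with hA
    have hjensen : Real.exp A
        ≤ (n-1)⁻¹ * ∑ xp ∈ S.erase x, Real.exp (‖Φ x - Φ xp‖^2 - α) := by
      have h := convexOn_exp.map_sum_le (t := S.erase x) (w := fun _ => (n-1)⁻¹)
        (p := fun xp => ‖Φ x - Φ xp‖^2 - α)
        (fun i _ => by positivity)
        (by rw [Finset.sum_const, nsmul_eq_mul, hcard, mul_inv_cancel₀ hm0.ne'])
        (fun i _ => Set.mem_univ _)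
      simp only [smul_eq_mul, ← Finset.mul_sum] at h
      rw [hA]
      exact h
    have h2 : (n-1) * Real.exp A ≤ ∑ xp ∈ S.erase x, Real.exp (‖Φ x - Φ xp‖^2 - α) := by
      have h3 := mul_le_mul_of_nonneg_left hjensen hm0.le
      rwa [← mul_assoc, mul_inv_cancel₀ hm0.ne', one_mul] at h3
    have h1 : (n-1) * Real.exp A
        ≤ 1 + ∑ xp ∈ S.erase x, Real.exp (‖Φ x - Φ xp‖^2 - α) := by linarith
    rw [hΩ x]
    calc Real.log (n-1) + A = Real.log ((n-1) * Real.exp A) := by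
          rw [Real.log_mul hm0.ne' (Real.exp_pos A).ne', Real.log_exp]
      _ ≤ _ := Real.log_le_log (by positivity) h1
  -- pairwise sum identity
  have hT : ∑ x ∈ S, ∑ xp ∈ S.erase x, ‖Φ x - Φ xp‖^2 = 2 * n * n * ∑ j, V j := by
    have he : ∀ x ∈ S, ∑ xp ∈ S.erase x, ‖Φ x - Φ xp‖^2 = ∑ xp ∈ S, ‖Φ x - Φ xp‖^2 := by
      intro x hx
      rw [← Finset.sum_erase_add S _ hx]
      simp
    rw [Finset.sum_congr rfl he]
    have hcoord : ∀ x xp : ι, ‖Φ x - Φ xp‖^2 = ∑ j, ((Φ x j - μ j) - (Φ xp j - μ j))^2 := by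
      intro x xp
      rw [hnorm]
      congr 1; ext j
      congr 1
      simp
    simp only [hcoord]
    have hswap : ∑ x ∈ S, ∑ xp ∈ S, ∑ j, ((Φ x j - μ j) - (Φ xp j - μ j))^2
        = ∑ j, ∑ x ∈ S, ∑ xp ∈ S, ((Φ x j - μ j) - (Φ xp j - μ j))^2 := by
      rw [Finset.sum_congr rfl fun x _ => Finset.sum_comm]
      exact Finset.sum_comm
    rw [hswap]
    have hj : ∀ j : Fin K, ∑ x ∈ S, ∑ xp ∈ S, ((Φ x j - μ j) - (Φ xp j - μ j))^2
        = 2 * n * (n * V j) := by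
      intro j
      have hzero : ∑ x ∈ S, (Φ x j - μ j) = 0 := by
        have hμj : μ j = n⁻¹ * ∑ x ∈ S, Φ x j := by
          rw [hμ]
          simp only [PiLp.smul_apply, smul_eq_mul]
          congr 1
          have key : ∀ T : Finset ι, (∑ x ∈ T, Φ x) j = ∑ x ∈ T, Φ x j := by
            intro T
            induction T using Finset.cons_induction with
            | empty => simp
            | cons a s ha ih => simp [Finset.sum_insert ha, ih]
          exact key S
        rw [Finset.sum_sub_distrib, Finset.sum_const, nsmul_eq_mul, hμj, ← hn]
        field_simp
        simp
      have hexp : ∑ x ∈ S, ∑ xp ∈ S, ((Φ x j - μ j) - (Φ xp j - μ j))^2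
          = 2*n*∑ x ∈ S, (Φ x j - μ j)^2 - 2*(∑ x ∈ S, (Φ x j - μ j))^2 := by
        simp only [sub_sq, Finset.sum_add_distrib, Finset.sum_sub_distrib, Finset.sum_const,
          nsmul_eq_mul, ← Finset.mul_sum, ← Finset.sum_mul, ← hn]
        ring
      rw [hexp, hzero, hV j, mul_inv_cancel_left₀ hn0.ne']
      ring
    rw [Finset.sum_congr rfl (fun j _ => hj j), ← Finset.mul_sum, ← Finset.mul_sum]
    ring
  -- sum the per-point bounds
  have hsum : n * Real.log (n-1) - n * α + (n-1)⁻¹ * (2 * n * n * ∑ j, V j)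
      ≤ ∑ x ∈ S, Ωpull x := by
    have h := Finset.sum_le_sum hpt
    have hinner : ∀ x ∈ S, ∑ xp ∈ S.erase x, (‖Φ x - Φ xp‖^2 - α)
        = (∑ xp ∈ S.erase x, ‖Φ x - Φ xp‖^2) - (n-1) * α := by
      intro x hx
      rw [Finset.sum_sub_distrib, Finset.sum_const, nsmul_eq_mul, hcardE x hx]
    have hrhs : ∑ x ∈ S, (Real.log (n-1) + (n-1)⁻¹ * ∑ xp ∈ S.erase x, (‖Φ x - Φ xp‖^2 - α))
        = n * Real.log (n-1) - n * α + (n-1)⁻¹ * (2 * n * n * ∑ j, V j) := by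
      rw [Finset.sum_add_distrib, Finset.sum_const, nsmul_eq_mul, ← hn,
        Finset.sum_congr rfl fun x hx => by rw [hinner x hx], ← Finset.mul_sum,
        Finset.sum_sub_distrib, Finset.sum_const, nsmul_eq_mul, ← hn, hT]
      field_simp
      ring
    linarith [hrhs ▸ h]
  -- conclude
  rw [ge_iff_le]
  have h2 := mul_le_mul_of_nonneg_left hsum (inv_nonneg.mpr hn0.le)
  calc (2 * n / (n - 1)) * (∑ j, V j) - α + Real.log (n - 1)
      = n⁻¹ * (n * Real.log (n-1) - n * α + (n-1)⁻¹ * (2 * n * n * ∑ j, V j)) := by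
        field_simp
        ring
    _ ≤ n⁻¹ * ∑ x ∈ S, Ωpull x := h2
end

section
/- Under the Gaussian embedding model of the previous statement with threshold t ∈ R, the thresholded AUC A_t = (1/L)∑_y E_{x|y} E_{x⁻|¬y} 1[f_y(x) − f_y(x⁻) > t] equals (1/(L(L−1))) ∑_y ∑_{y'≠y} Ψ((w_y^⊤(μ_y − μ_{y'}) − t) / (‖w_y‖ √(σ_y² + σ_{y'}²))), and A_t is nonincreasing in t. -/
open MeasureTheory ProbabilityTheory Finset
open scoped NNReal ENNReal

/-- The standard normal cumulative distribution function. -/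
noncomputable def stdNormalCDF (s : ℝ) : ℝ :=
  ∫ u in Set.Iic s, (Real.sqrt (2 * Real.pi))⁻¹ * Real.exp (-u ^ 2 / 2)

section Aux
open Real

noncomputable def sqNN (c : ℝ) : ℝ≥0 := ⟨c ^ 2, sq_nonneg _⟩

lemma pdf_mul_identity (m₁ m₂ : ℝ) {v₁ v₂ : ℝ≥0} (h₁ : v₁ ≠ 0) (h₂ : v₂ ≠ 0) (z x : ℝ) :
    gaussianPDFReal m₁ v₁ x * gaussianPDFReal (m₂ + x) v₂ z
      = gaussianPDFReal (m₁ + m₂) (v₁ + v₂) z *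
        gaussianPDFReal (m₁ + v₁ * (z - m₁ - m₂) / (v₁ + v₂)) (v₁ * v₂ / (v₁ + v₂)) x := by
  have hv₁ : (0:ℝ) < v₁ := lt_of_le_of_ne v₁.2 (by exact_mod_cast h₁.symm)
  have hv₂ : (0:ℝ) < v₂ := lt_of_le_of_ne v₂.2 (by exact_mod_cast h₂.symm)
  have hv : (0:ℝ) < (v₁:ℝ) + v₂ := by linarith
  simp only [gaussianPDFReal, NNReal.coe_add, NNReal.coe_mul, NNReal.coe_div]
  rw [mul_mul_mul_comm, mul_mul_mul_comm ((√(2 * π * ((v₁:ℝ) + v₂)))⁻¹), ← Real.exp_add,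
    ← Real.exp_add, ← mul_inv, ← mul_inv, ← Real.sqrt_mul (by positivity),
    ← Real.sqrt_mul (by positivity)]
  congr 2
  · congr 1
    field_simp
  · field_simp
    ring
lemma gaussian_conv (m₁ m₂ : ℝ) (v₁ v₂ : ℝ≥0) :
    ((gaussianReal m₁ v₁).prod (gaussianReal m₂ v₂)).map (fun p => p.1 + p.2)
      = gaussianReal (m₁ + m₂) (v₁ + v₂) := by
  by_cases h₁ : v₁ = 0
  · subst h₁
    rw [gaussianReal_zero_var, Measure.dirac_prod, Measure.map_map (by fun_prop) (by fun_prop)]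
    simpa [Function.comp_def, add_comm] using gaussianReal_map_const_add (μ := m₂) (v := v₂) m₁
  by_cases h₂ : v₂ = 0
  · subst h₂
    rw [gaussianReal_zero_var, Measure.prod_dirac, Measure.map_map (by fun_prop) (by fun_prop)]
    simpa [Function.comp_def] using gaussianReal_map_add_const (μ := m₁) (v := v₁) m₂
  -- nondegenerate case
  have h₁₂ : v₁ + v₂ ≠ 0 := by simp [h₁]
  ext s hs
  rw [Measure.map_apply (by fun_prop) hs, Measure.prod_apply (measurable_add hs)]
  have key : ∀ x : ℝ, (gaussianReal m₂ v₂) (Prod.mk x ⁻¹' ((fun p : ℝ × ℝ => p.1 + p.2) ⁻¹' s))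
      = ∫⁻ z in s, ENNReal.ofReal (gaussianPDFReal (m₂ + x) v₂ z) := by
    intro x
    have : Prod.mk x ⁻¹' ((fun p : ℝ × ℝ => p.1 + p.2) ⁻¹' s) = (x + ·) ⁻¹' s := rfl
    rw [this, ← Measure.map_apply (by fun_prop) hs, gaussianReal_map_const_add,
      gaussianReal_apply _ h₂ s]
    rfl
  simp_rw [key]
  rw [gaussianReal_of_var_ne_zero _ h₁, lintegral_withDensity_eq_lintegral_mul _ (measurable_gaussianPDF _ _)
    (by
      apply Measurable.lintegral_prod_right
      apply Measurable.ennreal_ofReal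
      unfold gaussianPDFReal
      fun_prop)]
  simp only [Pi.mul_apply, gaussianPDF]
  rw [gaussianReal_apply _ h₁₂ s]
  calc ∫⁻ x, ENNReal.ofReal (gaussianPDFReal m₁ v₁ x) *
        ∫⁻ z in s, ENNReal.ofReal (gaussianPDFReal (m₂ + x) v₂ z)
      = ∫⁻ x, ∫⁻ z in s, ENNReal.ofReal (gaussianPDFReal m₁ v₁ x * gaussianPDFReal (m₂ + x) v₂ z) := by
        congr 1; ext x
        rw [← lintegral_const_mul _ (by
          apply Measurable.ennreal_ofReal
          unfold gaussianPDFReal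
          fun_prop)]
        congr 1; ext z
        rw [ENNReal.ofReal_mul (gaussianPDFReal_nonneg _ _ _)]
    _ = ∫⁻ z in s, ∫⁻ x, ENNReal.ofReal (gaussianPDFReal m₁ v₁ x * gaussianPDFReal (m₂ + x) v₂ z) := by
        rw [lintegral_lintegral_swap]
        apply Measurable.aemeasurable
        apply Measurable.ennreal_ofReal
        unfold gaussianPDFReal
        fun_prop
    _ = ∫⁻ z in s, ENNReal.ofReal (gaussianPDFReal (m₁ + m₂) (v₁ + v₂) z) := by
        apply lintegral_congr
        intro z
        simp_rw [pdf_mul_identity m₁ m₂ h₁ h₂ z, ENNReal.ofReal_mul (gaussianPDFReal_nonneg _ _ _)]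
        rw [lintegral_const_mul _ (by
          apply Measurable.ennreal_ofReal
          unfold gaussianPDFReal
          fun_prop),
          lintegral_gaussianPDFReal_eq_one _ (by
            simp only [ne_eq, div_eq_zero_iff, mul_eq_zero, not_or]
            exact ⟨⟨h₁, h₂⟩, h₁₂⟩), mul_one]
    _ = _ := by simp [gaussianPDF]
lemma pi_gaussian_map_sum : ∀ (n : ℕ) (m : Fin n → ℝ) (v : Fin n → ℝ≥0) (a : Fin n → ℝ),
    (Measure.pi fun i => gaussianReal (m i) (v i)).map (fun x => ∑ i, a i * x i)
      = gaussianReal (∑ i, a i * m i) (∑ i, sqNN (a i) * v i) := by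
  intro n
  induction n with
  | zero =>
    intro m v a
    simp only [Finset.univ_eq_empty, Finset.sum_empty]
    rw [Measure.map_const, gaussianReal_zero_var]
    simp
  | succ n ih =>
    intro m v a
    have he := measurePreserving_piFinSuccAbove (fun i : Fin (n+1) => gaussianReal (m i) (v i)) 0
    simp only [Fin.succAbove_zero] at he
    set e := MeasurableEquiv.piFinSuccAbove (fun _ : Fin (n+1) => ℝ) 0 with he_def
    have hsum : (fun x : Fin (n+1) → ℝ => ∑ i, a i * x i)
        = (fun p : ℝ × (Fin n → ℝ) => a 0 * p.1 + ∑ j : Fin n, a j.succ * p.2 j) ∘ e := by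
      funext x
      simp only [Function.comp_apply, he_def, MeasurableEquiv.piFinSuccAbove,
        MeasurableEquiv.coe_mk, Fin.insertNthEquiv_symm_apply]
      rw [Fin.sum_univ_succ]
      simp [Fin.removeNth, Fin.succAbove, Fin.tail]
    rw [hsum, ← Measure.map_map (by fun_prop) e.measurable, he.map_eq]
    have hmaps : ((gaussianReal (m 0) (v 0)).prod
          (Measure.pi fun j : Fin n => gaussianReal (m j.succ) (v j.succ))).map
          (fun p : ℝ × (Fin n → ℝ) => a 0 * p.1 + ∑ j : Fin n, a j.succ * p.2 j)
        = ((((gaussianReal (m 0) (v 0)).map (fun x => a 0 * x)).prod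
            (((Measure.pi fun j : Fin n => gaussianReal (m j.succ) (v j.succ))).map
              (fun y : Fin n → ℝ => ∑ j, a j.succ * y j)))).map (fun p : ℝ × ℝ => p.1 + p.2) := by
      have hg : Measurable (fun x : ℝ => a 0 * x) := by fun_prop
      have hh : Measurable (fun y : Fin n → ℝ => ∑ j, a j.succ * y j) := by fun_prop
      rw [Measure.map_prod_map _ _ hg hh, Measure.map_map (by fun_prop) (hg.prodMap hh)]
      rfl
    rw [hmaps, gaussianReal_map_const_mul, ih, gaussian_conv,
      Fin.sum_univ_succ (fun i => a i * m i), Fin.sum_univ_succ (fun i => sqNN (a i) * v i)]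
    rfl
lemma stdNormalCDF_eq (s : ℝ) : stdNormalCDF s = ∫ u in Set.Iic s, gaussianPDFReal 0 1 u := by
  unfold stdNormalCDF
  congr 1
  funext u
  simp [gaussianPDFReal, neg_div]

lemma stdNormalCDF_mono : Monotone stdNormalCDF := by
  intro s₁ s₂ h
  rw [stdNormalCDF_eq, stdNormalCDF_eq]
  apply setIntegral_mono_set ((integrable_gaussianPDFReal 0 1).integrableOn)
    (ae_of_all _ (fun x => gaussianPDFReal_nonneg 0 1 x))
  exact HasSubset.Subset.eventuallyLE (Set.Iic_subset_Iic.2 h)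

lemma gaussianReal_Ioi (m t : ℝ) {v : ℝ≥0} (hv : v ≠ 0) :
    ((gaussianReal m v) (Set.Ioi t)).toReal = stdNormalCDF ((m - t) / Real.sqrt v) := by
  have hv' : (0:ℝ) < v := lt_of_le_of_ne v.2 (by exact_mod_cast hv.symm)
  have hsv : (0:ℝ) < Real.sqrt v := Real.sqrt_pos.2 hv'
  have hmap : (gaussianReal 0 1).map (fun x => -Real.sqrt v * x + m) = gaussianReal m v := by
    have h1 : ((gaussianReal 0 1).map (fun x => -Real.sqrt v * x)).map (fun x => x + m)
        = gaussianReal m v := by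
      rw [show (fun x : ℝ => -Real.sqrt v * x) = ((-Real.sqrt v) * ·) from rfl,
        gaussianReal_map_const_mul, show (fun x : ℝ => x + m) = (· + m) from rfl,
        gaussianReal_map_add_const]
      congr 1
      · ring
      · ext
        simp [Real.sq_sqrt v.2]
    rw [Measure.map_map (by fun_prop) (by fun_prop)] at h1
    convert h1 using 2
    rfl
  rw [← hmap, Measure.map_apply (by fun_prop) measurableSet_Ioi]
  have hpre : (fun x => -Real.sqrt v * x + m) ⁻¹' Set.Ioi t = Set.Iio ((m - t) / Real.sqrt v) := by
    ext x
    simp only [Set.mem_preimage, Set.mem_Ioi, Set.mem_Iio]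
    rw [lt_div_iff₀ hsv]
    constructor <;> intro h <;> nlinarith
  rw [hpre]
  have : (gaussianReal 0 1) (Set.Iio ((m - t) / Real.sqrt v))
      = (gaussianReal 0 1) (Set.Iic ((m - t) / Real.sqrt v)) := by
    have hnull : (gaussianReal 0 1) {(m - t) / Real.sqrt v} = 0 :=
      (gaussianReal_absolutelyContinuous _ one_ne_zero) (measure_singleton _)
    rw [← Set.Iio_union_right, measure_union (by simp) (measurableSet_singleton _), hnull, add_zero]
  rw [this, gaussianReal_apply_eq_integral _ one_ne_zero,
    ENNReal.toReal_ofReal (setIntegral_nonneg measurableSet_Iic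
      (fun x _ => gaussianPDFReal_nonneg 0 1 x)), stdNormalCDF_eq]

end Aux

lemma pair_prob {K : ℕ} (w : Fin K → ℝ) (hw : w ≠ 0) (t : ℝ)
    (μ₁ μ₂ : Fin K → ℝ) (σ₁ σ₂ : ℝ≥0) (h₁ : 0 < σ₁) (h₂ : 0 < σ₂) :
    (((Measure.pi fun i => gaussianReal (μ₁ i) (σ₁ ^ 2)).prod
        (Measure.pi fun i => gaussianReal (μ₂ i) (σ₂ ^ 2)))
      {p : (Fin K → ℝ) × (Fin K → ℝ) | (∑ i, w i * p.1 i) - (∑ i, w i * p.2 i) > t}).toReal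
    = stdNormalCDF (((∑ i, w i * (μ₁ i - μ₂ i)) - t) /
        (Real.sqrt (∑ i, w i ^ 2) * Real.sqrt ((σ₁ : ℝ) ^ 2 + (σ₂ : ℝ) ^ 2))) := by
  have hg : Measurable (fun x : Fin K → ℝ => ∑ i, w i * x i) := by fun_prop
  have hh : Measurable (fun x : Fin K → ℝ => ∑ i, (-(w i)) * x i) := by fun_prop
  have hwsum : (0:ℝ) < ∑ i, w i ^ 2 := by
    obtain ⟨i, hi⟩ := Function.ne_iff.mp hw
    have hi' : w i ≠ 0 := by simpa using hi
    exact Finset.sum_pos' (fun j _ => sq_nonneg _) ⟨i, Finset.mem_univ i, by positivity⟩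
  have hσ₁ : (0:ℝ) < (σ₁:ℝ) := h₁
  have hσ₂ : (0:ℝ) < (σ₂:ℝ) := h₂
  have hset : {p : (Fin K → ℝ) × (Fin K → ℝ) | (∑ i, w i * p.1 i) - (∑ i, w i * p.2 i) > t}
      = (fun p : (Fin K → ℝ) × (Fin K → ℝ) =>
          (∑ i, w i * p.1 i) + ∑ i, (-(w i)) * p.2 i) ⁻¹' Set.Ioi t := by
    ext p
    simp only [Set.mem_setOf_eq, Set.mem_preimage, Set.mem_Ioi, gt_iff_lt, neg_mul,
      Finset.sum_neg_distrib, ← sub_eq_add_neg]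
  rw [hset, ← Measure.map_apply (by fun_prop) measurableSet_Ioi]
  have hmaps : ((Measure.pi fun i => gaussianReal (μ₁ i) (σ₁ ^ 2)).prod
        (Measure.pi fun i => gaussianReal (μ₂ i) (σ₂ ^ 2))).map
        (fun p : (Fin K → ℝ) × (Fin K → ℝ) => (∑ i, w i * p.1 i) + ∑ i, (-(w i)) * p.2 i)
      = ((((Measure.pi fun i => gaussianReal (μ₁ i) (σ₁ ^ 2))).map
            (fun x => ∑ i, w i * x i)).prod
          (((Measure.pi fun i => gaussianReal (μ₂ i) (σ₂ ^ 2))).map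
            (fun x => ∑ i, (-(w i)) * x i))).map (fun p : ℝ × ℝ => p.1 + p.2) := by
    rw [Measure.map_prod_map _ _ hg hh, Measure.map_map (by fun_prop) (hg.prodMap hh)]
    rfl
  rw [hmaps, pi_gaussian_map_sum K μ₁ (fun _ => σ₁ ^ 2) w,
    pi_gaussian_map_sum K μ₂ (fun _ => σ₂ ^ 2) (fun i => -(w i)), gaussian_conv]
  set V : ℝ≥0 := (∑ i, sqNN (w i) * σ₁ ^ 2) + ∑ i, sqNN (-(w i)) * σ₂ ^ 2 with hV
  have hVr : (V:ℝ) = (∑ i, w i ^ 2) * ((σ₁:ℝ) ^ 2 + (σ₂:ℝ) ^ 2) := by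
    rw [hV]
    push_cast [sqNN]
    rw [← Finset.sum_add_distrib, Finset.sum_mul]
    exact Finset.sum_congr rfl fun i _ => by show w i ^ 2 * (σ₁:ℝ) ^ 2 + (-(w i)) ^ 2 * (σ₂:ℝ) ^ 2 = _; ring
  have hVpos : (0:ℝ) < (V:ℝ) := by rw [hVr]; positivity
  have hVne : V ≠ 0 := by
    intro h; rw [h] at hVpos; simp at hVpos
  rw [gaussianReal_Ioi _ _ hVne]
  congr 1
  rw [hVr, Real.sqrt_mul (by positivity)]
  congr 2
  rw [← Finset.sum_add_distrib]
  exact Finset.sum_congr rfl fun i _ => by ring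

/-- Thresholded one-vs-rest AUC under the Gaussian embedding model:
`A_t = (1/(L(L−1))) ∑_y ∑_{y'≠y} Ψ((w_y^⊤(μ_y − μ_{y'}) − t)/(‖w_y‖√(σ_y² + σ_{y'}²)))`,
and `A_t` is nonincreasing in `t`. -/
theorem auc_threshold_gaussian (K L : ℕ) (hL : 2 ≤ L)
    (μ : Fin L → Fin K → ℝ) (σ : Fin L → ℝ≥0) (hσ : ∀ y, 0 < σ y)
    (w : Fin L → Fin K → ℝ) (hw : ∀ y, w y ≠ 0) (b : Fin L → ℝ)
    (f : Fin L → (Fin K → ℝ) → ℝ)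
    (hf : ∀ y z, f y z = (∑ i, w y i * z i) + b y)
    (P : Fin L → Measure (Fin K → ℝ))
    (hP : ∀ y, P y = Measure.pi fun i => gaussianReal (μ y i) (σ y ^ 2))
    (Pneg : Fin L → Measure (Fin K → ℝ))
    (hPneg : ∀ y, Pneg y = ((L : ℝ≥0∞) - 1)⁻¹ • ∑ y' ∈ Finset.univ.erase y, P y')
    (A : ℝ → ℝ)
    (hA : ∀ t, A t = (1 / (L : ℝ)) *
        ∑ y, (((P y).prod (Pneg y)) {p | f y p.1 - f y p.2 > t}).toReal) :
    (∀ t, A t = (1 / ((L : ℝ) * ((L : ℝ) - 1))) *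
          ∑ y, ∑ y' ∈ Finset.univ.erase y,
            stdNormalCDF (((∑ i, w y i * (μ y i - μ y' i)) - t) /
              (Real.sqrt (∑ i, w y i ^ 2) *
                Real.sqrt ((σ y : ℝ) ^ 2 + (σ y' : ℝ) ^ 2))))
      ∧ ∀ t₁ t₂ : ℝ, t₁ ≤ t₂ → A t₂ ≤ A t₁ := by
  have hL1 : (1:ℝ) < (L:ℝ) := by exact_mod_cast hL.trans_lt' one_lt_two
  have hLm : (0:ℝ) < (L:ℝ) - 1 := by linarith
  haveI hPy : ∀ y, IsProbabilityMeasure (P y) := fun y => by rw [hP]; infer_instance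
  have hwpos : ∀ y, (0:ℝ) < ∑ i, w y i ^ 2 := by
    intro y
    obtain ⟨i, hi⟩ := Function.ne_iff.mp (hw y)
    have hi' : w y i ≠ 0 := by simpa using hi
    exact Finset.sum_pos' (fun j _ => sq_nonneg _) ⟨i, Finset.mem_univ i, by positivity⟩
  have key : ∀ (t : ℝ) (y : Fin L),
      (((P y).prod (Pneg y)) {p | f y p.1 - f y p.2 > t}).toReal
      = ((L:ℝ) - 1)⁻¹ * ∑ y' ∈ Finset.univ.erase y,
          stdNormalCDF (((∑ i, w y i * (μ y i - μ y' i)) - t) /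
            (Real.sqrt (∑ i, w y i ^ 2) *
              Real.sqrt ((σ y : ℝ) ^ 2 + (σ y' : ℝ) ^ 2))) := by
    intro t y
    have hfm : Measurable (f y) := by
      have : f y = fun z => (∑ i, w y i * z i) + b y := funext (hf y)
      rw [this]; fun_prop
    have hS : MeasurableSet {p : (Fin K → ℝ) × (Fin K → ℝ) | f y p.1 - f y p.2 > t} :=
      measurableSet_lt measurable_const ((hfm.comp measurable_fst).sub (hfm.comp measurable_snd))
    have hLE : ((L:ℝ≥0∞) - 1) ≠ 0 := by
      simp only [ne_eq, tsub_eq_zero_iff_le, not_le]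
      exact_mod_cast hL.trans_lt' one_lt_two
    haveI : IsFiniteMeasure (∑ y' ∈ Finset.univ.erase y, P y') := by
      constructor
      rw [Measure.finset_sum_apply]
      simp only [measure_univ]
      simp only [Finset.sum_const, nsmul_eq_mul, mul_one]
      exact lt_top_iff_ne_top.2 (ENNReal.natCast_ne_top _)
    haveI hsf : SFinite (Pneg y) := by
      rw [hPneg]
      have hc : ((L:ℝ≥0∞) - 1)⁻¹ ≠ ⊤ := by
        simp [ENNReal.inv_ne_top, hLE]
      haveI := Measure.smul_finite (∑ y' ∈ Finset.univ.erase y, P y') hc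
      infer_instance
    have hdec : ((P y).prod (Pneg y)) {p | f y p.1 - f y p.2 > t}
        = ((L:ℝ≥0∞) - 1)⁻¹ * ∑ y' ∈ Finset.univ.erase y,
            ((P y).prod (P y')) {p | f y p.1 - f y p.2 > t} := by
      rw [Measure.prod_apply hS]
      have hx : ∀ x, Pneg y (Prod.mk x ⁻¹' {p | f y p.1 - f y p.2 > t})
          = ((L:ℝ≥0∞) - 1)⁻¹ * ∑ y' ∈ Finset.univ.erase y,
              (P y') (Prod.mk x ⁻¹' {p | f y p.1 - f y p.2 > t}) := by
        intro x
        rw [hPneg]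
        simp [Measure.finset_sum_apply]
      simp_rw [hx]
      rw [lintegral_const_mul _ (Finset.measurable_sum _ fun y' _ =>
        measurable_measure_prodMk_left hS)]
      congr 1
      rw [lintegral_finset_sum _ (fun y' _ => measurable_measure_prodMk_left hS)]
      exact Finset.sum_congr rfl fun y' _ => (Measure.prod_apply hS).symm
    rw [hdec, ENNReal.toReal_mul,
      ENNReal.toReal_sum (fun y' _ => measure_ne_top _ _)]
    congr 1
    · rw [ENNReal.toReal_inv, ENNReal.toReal_sub_of_le
        (by exact_mod_cast Nat.one_le_of_lt hL) (by simp)]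
      simp
    · refine Finset.sum_congr rfl fun y' hy' => ?_
      have hSeq : {p : (Fin K → ℝ) × (Fin K → ℝ) | f y p.1 - f y p.2 > t}
          = {p : (Fin K → ℝ) × (Fin K → ℝ) |
              (∑ i, w y i * p.1 i) - (∑ i, w y i * p.2 i) > t} := by
        ext p
        simp only [Set.mem_setOf_eq, hf]
        constructor <;> intro h <;> linarith
      rw [hSeq, hP, hP]
      exact pair_prob (w y) (hw y) t (μ y) (μ y') (σ y) (σ y') (hσ y) (hσ y')
  have hform : ∀ t, A t = (1 / ((L : ℝ) * ((L : ℝ) - 1))) *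
      ∑ y, ∑ y' ∈ Finset.univ.erase y,
        stdNormalCDF (((∑ i, w y i * (μ y i - μ y' i)) - t) /
          (Real.sqrt (∑ i, w y i ^ 2) *
            Real.sqrt ((σ y : ℝ) ^ 2 + (σ y' : ℝ) ^ 2))) := by
    intro t
    rw [hA]
    simp_rw [key t]
    rw [← Finset.mul_sum]
    have h0 : (L:ℝ) ≠ 0 := by linarith
    have h1 : (L:ℝ) - 1 ≠ 0 := ne_of_gt hLm
    field_simp
  refine ⟨hform, ?_⟩
  intro t₁ t₂ h
  rw [hform t₁, hform t₂]
  have hc : (0:ℝ) ≤ 1 / ((L:ℝ) * ((L:ℝ) - 1)) := by positivity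
  refine mul_le_mul_of_nonneg_left ?_ hc
  refine Finset.sum_le_sum fun y _ => Finset.sum_le_sum fun y' _ => ?_
  apply stdNormalCDF_mono
  have hD : (0:ℝ) < Real.sqrt (∑ i, w y i ^ 2) *
      Real.sqrt ((σ y : ℝ) ^ 2 + (σ y' : ℝ) ^ 2) := by
    have h1 : (0:ℝ) < (σ y : ℝ) := hσ y
    have h2 : (0:ℝ) < (σ y' : ℝ) := hσ y'
    exact mul_pos (Real.sqrt_pos.2 (hwpos y)) (Real.sqrt_pos.2 (by positivity))
  exact (div_le_div_iff_of_pos_right hD).2 (by linarith)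
end
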